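/- The underlying undirected graph of D_n has chromatic number at least n. -/

import Mathlib

/-- Vertex set of the digraph `D (n+1)` from the paper (`Vtx n` = vertices of `D_{n+1}`). -/
def Vtx : ℕ → Type
  | 0 => Unit
  | (n+1) => (Fin (n+1) × Vtx n) ⊕ ((i : Fin (n+1)) → Vtx n)

/-- Edge relation of `D_{n+1}`. -/
def DEdge : (n : ℕ) → Vtx n → Vtx n → Prop
  | 0, _, _ => False
  | (n+1), Sum.inl (i, x), Sum.inl (j, y) => i = j ∧ DEdge n x y
  | (n+1), Sum.inl (i, x), Sum.inr T => T i = x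
  | (_+1), Sum.inr _, _ => False

/-- There is a directed walk of length `k` from `u` to `v`. -/
def WalkLen {V : Type*} (E : V → V → Prop) (u v : V) (k : ℕ) : Prop :=
  ∃ f : Fin (k+1) → V, f 0 = u ∧ f (Fin.last k) = v ∧
    ∀ i : Fin k, E (f i.castSucc) (f i.succ)

/-- `l` is a directed path (as a list of distinct vertices) from `u` to `v`. -/
def IsDPath {V : Type*} (E : V → V → Prop) (u v : V) (l : List V) : Prop :=
  l.Chain' E ∧ l.Nodup ∧ l.head? = some u ∧ l.getLast? = some v

/-- Positive edges of `D'`. -/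
def PosE {V : Type*} (E : V → V → Prop) (u v : V) : Prop :=
  ∃ k, k % 3 = 1 ∧ WalkLen E u v k

/-- Negative edges of `D'`. -/
def NegE {V : Type*} (E : V → V → Prop) (u v : V) : Prop :=
  ∃ k, k % 3 = 2 ∧ WalkLen E v u k

/-- Edge relation of `D_{n+1}'`. -/
def DEdge' (n : ℕ) (u v : Vtx n) : Prop :=
  PosE (DEdge n) u v ∨ NegE (DEdge n) u v

/-- Underlying undirected graph of a digraph. -/
def underSG {V : Type*} (E : V → V → Prop) : SimpleGraph V :=
  SimpleGraph.fromRel E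

/-- `G_{n+1}`, the underlying undirected graph of `D_{n+1}'`. -/
def Gn (n : ℕ) : SimpleGraph (Vtx n) := underSG (DEdge' n)

/-- A digraph is acyclic iff no vertex lies on a directed cycle. -/
def DAcyclic {V : Type*} (E : V → V → Prop) : Prop :=
  ∀ v : V, ¬ Relation.TransGen E v v

/-- `k`-dicolorability. -/
def Dicolorable {V : Type*} (E : V → V → Prop) (k : ℕ) : Prop :=
  ∃ f : V → Fin k, ∀ c : Fin k,
    DAcyclic (fun a b => E a b ∧ f a = c ∧ f b = c)

/-- `D` has an induced directed cycle of odd length at least 5. -/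
def HasInducedOddCycle {V : Type*} (E : V → V → Prop) : Prop :=
  ∃ m : ℕ, 5 ≤ m ∧ Odd m ∧ ∃ f : ZMod m → V, Function.Injective f ∧
    (∀ i, E (f i) (f (i+1))) ∧ (∀ i j, E (f i) (f j) → j = i + 1)
lemma DEdge_irrefl : ∀ n (v : Vtx n), ¬ DEdge n v v := by
  intro n
  induction n with
  | zero => intro v h; exact h
  | succ n ih =>
    rintro (⟨i, x⟩ | T) h
    · exact ih x h.2
    · exact h

/-- Key Zykov lemma: any proper coloring of `D_{n+1}` contains `n+1` vertices with
pairwise distinct colors. -/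
lemma key : ∀ (n : ℕ) {α : Type} (f : Vtx n → α),
    (∀ u v, DEdge n u v → f u ≠ f v) →
    ∃ g : Fin (n + 1) → Vtx n, Function.Injective (f ∘ g) := by
  intro n
  induction n with
  | zero =>
    intro α f _
    exact ⟨fun _ => (), fun i j _ => Fin.ext (by omega)⟩
  | succ n ih =>
    intro α f hf
    classical
    have hcopy : ∀ i : Fin (n + 1), ∀ u v, DEdge n u v →
        f (Sum.inl (i, u)) ≠ f (Sum.inl (i, v)) := by
      intro i u v h
      exact hf _ _ (⟨rfl, h⟩ : DEdge (n + 1) (Sum.inl (i, u)) (Sum.inl (i, v)))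
    choose g hg using fun i : Fin (n + 1) =>
      ih (fun x : Vtx n => f (Sum.inl (i, x))) (hcopy i)
    set S : Finset α :=
      Finset.image (fun j => f (Sum.inl ((0 : Fin (n + 1)), g 0 j))) Finset.univ with hS
    have hScard : S.card = n + 1 := by
      rw [hS]
      exact (Finset.card_image_of_injective Finset.univ (hg 0)).trans (by simp)
    by_cases hall : ∀ u : (Fin (n + 1) × Vtx n) ⊕ ((i : Fin (n + 1)) → Vtx n), f u ∈ S
    · exfalso
      -- every copy realizes every color of S
      have hTi : ∀ i : Fin (n + 1),
          Finset.image (fun j => f (Sum.inl (i, g i j))) Finset.univ = S := by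
        intro i
        apply Finset.eq_of_subset_of_card_le
        · intro a ha
          obtain ⟨j, _, rfl⟩ := Finset.mem_image.1 ha
          exact hall _
        · have hci : (Finset.image (fun j => f (Sum.inl (i, g i j))) Finset.univ).card = n + 1 :=
            (Finset.card_image_of_injective Finset.univ (hg i)).trans (by simp)
          rw [hci, hScard]
      have hexists : ∀ i : Fin (n + 1), ∃ j : Fin (n + 1),
          f (Sum.inl (i, g i j)) = f (Sum.inl ((0 : Fin (n + 1)), g 0 i)) := by
        intro i
        have : f (Sum.inl ((0 : Fin (n + 1)), g 0 i)) ∈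
            Finset.image (fun j => f (Sum.inl (i, g i j))) Finset.univ := by
          rw [hTi i]
          exact Finset.mem_image_of_mem _ (Finset.mem_univ i)
        obtain ⟨j, _, hj⟩ := Finset.mem_image.1 this
        exact ⟨j, hj⟩
      choose jj hjj using hexists
      set T : (i : Fin (n + 1)) → Vtx n := fun i => g i (jj i) with hT
      have hmem : f (Sum.inr T) ∈ S := hall _
      obtain ⟨i, _, hi⟩ := Finset.mem_image.1 hmem
      have hedge : DEdge (n + 1) (Sum.inl (i, T i)) (Sum.inr T) := rfl
      exact hf _ _ hedge (by rw [hT]; rw [hjj i, hi])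
    · push_neg at hall
      obtain ⟨u, hu⟩ := hall
      refine ⟨Fin.snoc (fun j : Fin (n + 1) => Sum.inl ((0 : Fin (n + 1)), g 0 j)) u, ?_⟩
      have hmemS : ∀ j : Fin (n + 1), f (Sum.inl ((0 : Fin (n + 1)), g 0 j)) ∈ S :=
        fun j => Finset.mem_image_of_mem _ (Finset.mem_univ j)
      intro i j hij
      rcases Fin.eq_castSucc_or_eq_last i with ⟨i', rfl⟩ | rfl <;>
        rcases Fin.eq_castSucc_or_eq_last j with ⟨j', rfl⟩ | rfl
      · erw [Function.comp_apply, Function.comp_apply, Fin.snoc_castSucc, Fin.snoc_castSucc] at hij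
        exact congrArg Fin.castSucc (hg 0 hij)
      · erw [Function.comp_apply, Function.comp_apply, Fin.snoc_castSucc, Fin.snoc_last] at hij
        exact absurd (hij ▸ hmemS i') hu
      · erw [Function.comp_apply, Function.comp_apply, Fin.snoc_last, Fin.snoc_castSucc] at hij
        exact absurd (hij.symm ▸ hmemS j') hu
      · rfl

/-- the underlying undirected graph of `D_{n+1}` has chromatic number
at least `n+1`. -/
theorem Dn_chromatic (n : ℕ) :
    ((n + 1 : ℕ) : ℕ∞) ≤ (underSG (DEdge n)).chromaticNumber := by
  rw [SimpleGraph.chromaticNumber]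
  refine le_iInf₂ fun m hm => ?_
  obtain ⟨C⟩ := hm
  have hf : ∀ u v, DEdge n u v → C u ≠ C v := by
    intro u v h
    apply C.valid
    show (SimpleGraph.fromRel (DEdge n)).Adj u v
    rw [SimpleGraph.fromRel_adj]
    exact ⟨fun heq => DEdge_irrefl n u (heq ▸ h), Or.inl h⟩
  obtain ⟨g, hg⟩ := key n (⇑C) hf
  have hle := Fintype.card_le_of_injective _ hg
  simp only [Fintype.card_fin] at hle
  exact_mod_cast hle
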